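/- arXiv:0812.1983 — 6 statements merged into one kernel-verified Lean document; each statement's English description precedes it below -/
import Mathlib

section
/- Let q ∈ ℂ with |q|>1, d ∈ ℂ*, and ν a nonzero integer. Then the operator f(z) ↦ f(qz) - d z^ν f(z) is surjective on the field ℂ((z)) of formal Laurent series. -/
/-- The `q`-dilation operator on formal Laurent series, sending `Σ aₙ zⁿ` to `Σ aₙ qⁿ zⁿ`,
i.e. `f(z) ↦ f(qz)`. -/
noncomputable def sigmaq (q : ℂ) (f : LaurentSeries ℂ) : LaurentSeries ℂ :=
  ⟨fun n => q ^ n * f.coeff n, f.isPWO_support'.mono (fun n hn => by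
    simp only [Function.mem_support] at hn ⊢
    exact fun h => hn (by rw [h, mul_zero]))⟩

/-- Fueled recursion `X n = α n + β n * X (n - s)`, with `X n = 0` for `n < N`. -/
noncomputable def solF (α β : ℤ → ℂ) (N s : ℤ) : ℕ → ℤ → ℂ
  | 0, _ => 0
  | (k+1), n => if n < N then 0 else α n + β n * solF α β N s k (n - s)

lemma solF_stable (α β : ℤ → ℂ) (N s : ℤ) (hs : 0 < s) :
    ∀ k : ℕ, ∀ n : ℤ, n < N + (k : ℤ) → solF α β N s k n = solF α β N s (k+1) n := by
  intro k
  induction k with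
  | zero =>
    intro n hn
    have h : n < N := by exact_mod_cast (by simpa using hn)
    simp [solF, h]
  | succ k ih =>
    intro n hn
    by_cases h : n < N
    · simp [solF, h]
    · show (if n < N then 0 else α n + β n * solF α β N s k (n - s)) =
        (if n < N then 0 else α n + β n * solF α β N s (k+1) (n - s))
      rw [if_neg h, if_neg h, ih (n - s) (by push_cast at hn ⊢; omega)]

lemma solF_stable' (α β : ℤ → ℂ) (N s : ℤ) (hs : 0 < s) :
    ∀ (j k : ℕ) (n : ℤ), n < N + (k : ℤ) → solF α β N s k n = solF α β N s (k+j) n := by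
  intro j
  induction j with
  | zero => intro k n _; rfl
  | succ j ih =>
    intro k n hn
    rw [ih k n hn, show k + (j+1) = (k+j) + 1 by ring]
    exact solF_stable α β N s hs (k+j) n (by push_cast at hn ⊢; omega)

lemma solF_eq (α β : ℤ → ℂ) (N s : ℤ) (hs : 0 < s) (k k' : ℕ) (n : ℤ)
    (h1 : n < N + (k : ℤ)) (h2 : n < N + (k' : ℤ)) :
    solF α β N s k n = solF α β N s k' n := by
  rcases le_total k k' with h | h
  · obtain ⟨j, rfl⟩ := Nat.exists_eq_add_of_le h
    exact solF_stable' α β N s hs j k n h1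
  · obtain ⟨j, rfl⟩ := Nat.exists_eq_add_of_le h
    exact (solF_stable' α β N s hs j k' n h2).symm

/-- The solution function. -/
noncomputable def solX (α β : ℤ → ℂ) (N s : ℤ) (n : ℤ) : ℂ :=
  solF α β N s (n - N + 1).toNat n

lemma solX_fuel (α β : ℤ → ℂ) (N s : ℤ) (hs : 0 < s) (k : ℕ) (n : ℤ)
    (h : n < N + (k : ℤ)) : solF α β N s k n = solX α β N s n := by
  apply solF_eq α β N s hs _ _ _ h
  rcases lt_or_ge n N with h' | h'
  · have : (n - N + 1).toNat = 0 ∨ (n - N + 1).toNat = 1 := by omega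
    rcases this with h'' | h'' <;> rw [h''] <;> push_cast <;> omega
  · have : ((n - N + 1).toNat : ℤ) = n - N + 1 := by omega
    omega

lemma solX_zero (α β : ℤ → ℂ) (N s : ℤ) (n : ℤ) (h : n < N) :
    solX α β N s n = 0 := by
  rcases Nat.eq_zero_or_pos (n - N + 1).toNat with h' | h'
  · simp [solX, h', solF]
  · obtain ⟨k, hk⟩ := Nat.exists_eq_succ_of_ne_zero h'.ne'
    simp [solX, hk, solF, h]

lemma solX_rec (α β : ℤ → ℂ) (N s : ℤ) (hs : 0 < s) (hα : ∀ n < N, α n = 0) (n : ℤ) :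
    solX α β N s n = α n + β n * solX α β N s (n - s) := by
  rcases lt_or_ge n N with h | h
  · rw [solX_zero α β N s n h, solX_zero α β N s (n - s) (by omega), hα n h]
    ring
  · have hk : ((n - N + 1).toNat : ℤ) = n - N + 1 := by omega
    have hk2 : (n - N + 1).toNat = (n - N).toNat + 1 := by omega
    rw [solX, hk2]
    simp only [solF, if_neg (not_lt.mpr h)]
    congr 1
    congr 1
    apply solX_fuel α β N s hs
    omega

theorem stmt_8 (q d : ℂ) (hq : 1 < ‖q‖) (hd : d ≠ 0) (ν : ℤ) (hν : ν ≠ 0) :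
    Function.Surjective
      (fun f : LaurentSeries ℂ => sigmaq q f - HahnSeries.single ν d * f) := by
  have hq0 : q ≠ 0 := by
    intro h; rw [h, norm_zero] at hq; linarith
  intro g
  rcases lt_or_gt_of_ne hν with hν' | hν'
  · -- ν < 0 : X m = -d⁻¹ g(m+ν) + d⁻¹ q^(m+ν) X(m+ν), step s = -ν
    set N : ℤ := g.order - ν with hN
    set α : ℤ → ℂ := fun m => -d⁻¹ * g.coeff (m + ν) with hα
    set β : ℤ → ℂ := fun m => d⁻¹ * q ^ (m + ν) with hβ
    have hs : (0:ℤ) < -ν := by omega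
    have hα0 : ∀ m < N, α m = 0 := by
      intro m hm
      have : g.coeff (m + ν) = 0 :=
        HahnSeries.coeff_eq_zero_of_lt_order (by omega)
      simp [hα, this]
    set X : ℤ → ℂ := solX α β N (-ν) with hX
    have hbdd : BddBelow (Function.support X) := by
      refine ⟨N, fun m hm => ?_⟩
      by_contra h
      exact hm (solX_zero α β N (-ν) m (by omega))
    refine ⟨HahnSeries.ofSuppBddBelow X hbdd, ?_⟩
    ext n
    have key : q ^ n * X n - d * X (n - ν) = g.coeff n := by
      have hrec := solX_rec α β N (-ν) hs hα0 (n - ν)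
      rw [show n - ν - -ν = n by ring, ← hX] at hrec
      rw [hrec]
      simp only [hα, hβ]
      rw [show n - ν + ν = n by ring]
      field_simp
      ring
    simp only [HahnSeries.coeff_sub]
    rw [show n = (n - ν) + ν by ring, HahnSeries.coeff_single_mul_add]
    show q ^ ((n - ν) + ν) * X ((n - ν) + ν) - d * X (n - ν) = g.coeff ((n - ν) + ν)
    rw [show (n - ν) + ν = n by ring]
    exact key
  · -- ν > 0 : X n = q^(-n) g n + q^(-n) d X(n-ν), step s = ν
    set N : ℤ := g.order with hN
    set α : ℤ → ℂ := fun n => q ^ (-n) * g.coeff n with hα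
    set β : ℤ → ℂ := fun n => q ^ (-n) * d with hβ
    have hα0 : ∀ m < N, α m = 0 := by
      intro m hm
      have : g.coeff m = 0 := HahnSeries.coeff_eq_zero_of_lt_order hm
      simp [hα, this]
    set X : ℤ → ℂ := solX α β N ν with hX
    have hbdd : BddBelow (Function.support X) := by
      refine ⟨N, fun m hm => ?_⟩
      by_contra h
      exact hm (solX_zero α β N ν m (by omega))
    refine ⟨HahnSeries.ofSuppBddBelow X hbdd, ?_⟩
    ext n
    have hqn : q ^ n * q ^ (-n) = 1 := by
      rw [← zpow_add₀ hq0]; simp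
    have key : q ^ n * X n - d * X (n - ν) = g.coeff n := by
      have hrec := solX_rec α β N ν hν' hα0 n
      rw [← hX] at hrec
      rw [hrec]
      simp only [hα, hβ]
      rw [mul_add, ← mul_assoc, hqn, one_mul, ← mul_assoc, ← mul_assoc, hqn]
      ring
    simp only [HahnSeries.coeff_sub]
    rw [show n = (n - ν) + ν by ring, HahnSeries.coeff_single_mul_add]
    show q ^ ((n - ν) + ν) * X ((n - ν) + ν) - d * X (n - ν) = g.coeff ((n - ν) + ν)
    rw [show (n - ν) + ν = n by ring]
    exact key
end

section
/- Let q ∈ ℂ with |q|>1 and d ∈ ℂ*, ν ≥ 1. Then for every convergent power series g ∈ ℂ{z}, the solution f of f(qz) - d z^ν f(z) = g given by the coefficient recurrence f_n = q^{-n}(d f_{n-ν} + g_n) (with f_0,…,f_{ν-1} prescribed) is a convergent power series; hence σ_q - d z^ν : ℂ{z} → ℂ{z} is surjective. -/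
open PowerSeries in
/-- A power series is convergent if it has a positive radius of convergence. -/
def IsConvPS (f : PowerSeries ℂ) : Prop :=
  ∃ r : ℝ, 0 < r ∧ Summable fun n : ℕ => ‖PowerSeries.coeff n f‖ * r ^ n

open PowerSeries

/-- Coefficientwise form of the q-difference equation. -/
lemma coeffRel (q d : ℂ) (ν : ℕ) (f g : PowerSeries ℂ) :
    rescale q f - d • (X ^ ν * f) = g ↔
    ∀ n : ℕ, q ^ n * coeff n f
      - d * (if ν ≤ n then coeff (n - ν) f else 0) = coeff n g := by
  rw [PowerSeries.ext_iff]
  apply forall_congr'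
  intro n
  rw [map_sub, coeff_rescale, coeff_smul, coeff_X_pow_mul', smul_eq_mul]

noncomputable def solCoeff (q d : ℂ) (ν : ℕ) (g : ℕ → ℂ) (n : ℕ) : ℂ :=
  if h : 0 < ν ∧ ν ≤ n then (g n + d * solCoeff q d ν g (n - ν)) / q ^ n
  else g n / q ^ n
  termination_by n
  decreasing_by omega

set_option maxHeartbeats 1000000 in
/-- Any solution with convergent right-hand side is convergent. -/
lemma conv_of_rel (q d : ℂ) (hq : 1 < ‖q‖) (ν : ℕ) (hν : 1 ≤ ν)
    (f g : PowerSeries ℂ) (hg : IsConvPS g)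
    (hrel : ∀ n : ℕ, q ^ n * coeff n f
      - d * (if ν ≤ n then coeff (n - ν) f else 0) = coeff n g) :
    IsConvPS f := by
  obtain ⟨r, hr, hsum⟩ := hg
  obtain ⟨C, hCdef⟩ : ∃ C : ℝ, C = ∑' n : ℕ, ‖coeff n g‖ * r ^ n := ⟨_, rfl⟩
  have hC0 : 0 ≤ C := hCdef ▸ tsum_nonneg fun n => by positivity
  have hgb : ∀ n, ‖coeff n g‖ * r ^ n ≤ C := fun n =>
    hCdef ▸ Summable.le_tsum hsum n fun m _ => by positivity
  obtain ⟨t, htdef⟩ : ∃ t : ℝ, t = max (1 / r) (1 + ‖d‖) := ⟨_, rfl⟩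
  have ht1 : 1 ≤ t := htdef ▸ le_trans (by linarith [norm_nonneg d]) (le_max_right _ _)
  have ht0 : 0 < t := lt_of_lt_of_le one_pos ht1
  have hgb' : ∀ n, ‖coeff n g‖ ≤ C * t ^ n := by
    intro n
    have h1 : ‖coeff n g‖ ≤ C * (1 / r) ^ n := by
      rw [div_pow, one_pow, mul_one_div, le_div_iff₀ (pow_pos hr n)]
      exact hgb n
    calc ‖coeff n g‖ ≤ C * (1 / r) ^ n := h1
      _ ≤ C * t ^ n := by
          apply mul_le_mul_of_nonneg_left _ hC0
          exact pow_le_pow_left₀ (by positivity) (htdef ▸ le_max_left _ _) n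
  have hdt : ‖d‖ ≤ t ^ ν := by
    calc ‖d‖ ≤ t := htdef ▸ le_trans (by linarith) (le_max_right _ _)
      _ = t ^ 1 := (pow_one t).symm
      _ ≤ t ^ ν := pow_le_pow_right₀ ht1 hν
  have hq1 : (0:ℝ) < ‖q‖ - 1 := by linarith
  obtain ⟨M, hMdef⟩ : ∃ M : ℝ, M = C / (‖q‖ - 1) + C + 1 := ⟨_, rfl⟩
  have hdivnn : 0 ≤ C / (‖q‖ - 1) := div_nonneg hC0 hq1.le
  have hM0 : 0 < M := by rw [hMdef]; linarith
  have hMq : C + M ≤ M * ‖q‖ := by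
    have h1 : C / (‖q‖ - 1) * (‖q‖ - 1) = C := div_mul_cancel₀ C (ne_of_gt hq1)
    nlinarith
  have key : ∀ n, ‖coeff n f‖ ≤ M * t ^ n := by
    intro n
    induction n using Nat.strong_induction_on with
    | _ n ih =>
      have hq0 : (0:ℝ) < ‖q‖ := by linarith
      have hqn : ‖q ^ n‖ = ‖q‖ ^ n := norm_pow q n
      by_cases h : ν ≤ n
      · have hrec := hrel n
        rw [if_pos h] at hrec
        have heq : q ^ n * coeff n f = coeff n g + d * coeff (n - ν) f := by
          linear_combination hrec
        have htt : t ^ ν * t ^ (n - ν) = t ^ n := by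
          rw [← pow_add]; congr 1; omega
        have hdM : ‖d‖ * (M * t ^ (n - ν)) ≤ M * t ^ n := by
          calc ‖d‖ * (M * t ^ (n - ν)) ≤ t ^ ν * (M * t ^ (n - ν)) :=
                mul_le_mul_of_nonneg_right hdt (by positivity)
            _ = M * t ^ n := by rw [← htt]; ring
        have hbound : ‖q‖ ^ n * ‖coeff n f‖ ≤ C * t ^ n + M * t ^ n := by
          calc ‖q‖ ^ n * ‖coeff n f‖ = ‖q ^ n * coeff n f‖ := by
                rw [norm_mul, hqn]
            _ = ‖coeff n g + d * coeff (n - ν) f‖ := by rw [heq]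
            _ ≤ ‖coeff n g‖ + ‖d‖ * ‖coeff (n - ν) f‖ := by
                refine le_trans (norm_add_le _ _) ?_
                rw [norm_mul]
            _ ≤ C * t ^ n + ‖d‖ * (M * t ^ (n - ν)) := by
                have h5 := ih (n - ν) (by omega)
                have h6 := hgb' n
                nlinarith [norm_nonneg d]
            _ ≤ C * t ^ n + M * t ^ n := by linarith
        have hqq : ‖q‖ ≤ ‖q‖ ^ n := by
          calc ‖q‖ = ‖q‖ ^ 1 := (pow_one _).symm
            _ ≤ ‖q‖ ^ n := pow_le_pow_right₀ hq.le (by omega)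
        have hfn : ‖q‖ * ‖coeff n f‖ ≤ (C + M) * t ^ n := by
          nlinarith [norm_nonneg (coeff n f), pow_pos ht0 n]
        have h7 : ‖coeff n f‖ * ‖q‖ ≤ (M * t ^ n) * ‖q‖ := by
          nlinarith [pow_pos ht0 n]
        exact le_of_mul_le_mul_right h7 hq0
      · have hrec := hrel n
        rw [if_neg h, mul_zero, sub_zero] at hrec
        have h1 : ‖q‖ ^ n * ‖coeff n f‖ = ‖coeff n g‖ := by
          rw [← hqn, ← norm_mul, hrec]
        have h2 : (1:ℝ) ≤ ‖q‖ ^ n := one_le_pow₀ hq.le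
        have h3 : ‖coeff n f‖ ≤ ‖coeff n g‖ := by
          nlinarith [norm_nonneg (coeff n f)]
        have hCM : C ≤ M := by rw [hMdef]; linarith
        calc ‖coeff n f‖ ≤ ‖coeff n g‖ := h3
          _ ≤ C * t ^ n := hgb' n
          _ ≤ M * t ^ n := mul_le_mul_of_nonneg_right hCM (by positivity)
  refine ⟨1 / (2 * t), by positivity, ?_⟩
  have hgeo : Summable (fun n : ℕ => M * (1 / 2) ^ n) :=
    (summable_geometric_of_lt_one (r := (1/2:ℝ)) (by norm_num) (by norm_num)).mul_left M
  refine Summable.of_nonneg_of_le (fun n => by positivity) (fun n => ?_) hgeo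
  have hsplit : (1 / (2 * t)) ^ n = (1 / 2) ^ n * (1 / t) ^ n := by
    rw [← mul_pow]; congr 1; field_simp
  rw [hsplit]
  have h1 : ‖coeff n f‖ * (1 / t) ^ n ≤ M := by
    have h2 : (1 / t) ^ n * t ^ n = 1 := by
      rw [← mul_pow]; field_simp; exact one_pow n
    nlinarith [pow_pos ht0 n, pow_pos (show (0:ℝ) < 1 / t by positivity) n, key n]
  calc ‖coeff n f‖ * ((1 / 2) ^ n * (1 / t) ^ n)
      = (‖coeff n f‖ * (1 / t) ^ n) * (1 / 2) ^ n := by ring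
    _ ≤ M * (1 / 2) ^ n := by
        have h4 : (0:ℝ) ≤ (1/2:ℝ) ^ n := by positivity
        nlinarith

open PowerSeries in
theorem stmt_9 (q d : ℂ) (hq : 1 < ‖q‖) (hd : d ≠ 0) (ν : ℕ) (hν : 1 ≤ ν)
    (g : PowerSeries ℂ) (hg : IsConvPS g) :
    (∀ f : PowerSeries ℂ, rescale q f - d • (X ^ ν * f) = g → IsConvPS f) ∧
    (∃ f : PowerSeries ℂ, IsConvPS f ∧ rescale q f - d • (X ^ ν * f) = g) := by
  have hq0 : q ≠ 0 := by
    intro h; rw [h, norm_zero] at hq; linarith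
  constructor
  · intro f hf
    exact conv_of_rel q d hq ν hν f g hg ((coeffRel q d ν f g).mp hf)
  · have hfe : rescale q (PowerSeries.mk (solCoeff q d ν (fun n => coeff n g)))
        - d • (X ^ ν * PowerSeries.mk (solCoeff q d ν (fun n => coeff n g))) = g := by
      rw [coeffRel]
      intro n
      have hqn : q ^ n ≠ 0 := pow_ne_zero n hq0
      by_cases h : ν ≤ n
      · rw [if_pos h]
        simp only [coeff_mk]
        rw [solCoeff, dif_pos ⟨by omega, h⟩]
        field_simp
        ring
      · rw [if_neg h, mul_zero, sub_zero]
        simp only [coeff_mk]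
        rw [solCoeff, dif_neg (by omega)]
        field_simp
    exact ⟨_, conv_of_rel q d hq ν hν _ g hg ((coeffRel q d ν _ g).mp hfe), hfe⟩
end

section
/- Let q ∈ ℂ with |q|>1. A formal power series Σ φ_n z^n is q-Gevrey of level 1 whenever there exist A, C > 0 with |φ_n| ≤ C A^n |q|^{-n(n-1)/2}. If φ is q-Gevrey of level 1 and φ(1) = 0 (i.e. Σ_n φ_n = 0), then the series γ with γ_n = Σ_{k ≤ n} φ_k, which satisfies (1-z)γ(z) = φ(z), is also q-Gevrey of level 1. -/
open Finset Filter Topology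

private lemma tri_mul (m : ℕ) : m * (m - 1) / 2 * 2 = m * (m - 1) := by
  have h : Even (m * (m - 1)) := by
    rcases m with _ | k
    · simp
    · simpa [mul_comm] using Nat.even_mul_succ_self k
  exact Nat.div_mul_cancel h.two_dvd

private lemma tri_add (n i : ℕ) :
    n * (n - 1) / 2 + (i + 1) * ((i + 1) - 1) / 2 ≤ (i + n + 1) * ((i + n + 1) - 1) / 2 := by
  have h1 := tri_mul n
  have h2 := tri_mul (i + 1)
  have h3 := tri_mul (i + n + 1)
  have h4 : n * (n - 1) + (i + 1) * ((i + 1) - 1) ≤ (i + n + 1) * ((i + n + 1) - 1) := by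
    rcases n with _ | m
    · simp
    · simp only [Nat.add_sub_cancel]
      nlinarith
  omega

theorem stmt_10 (q : ℂ) (hq : 1 < ‖q‖) (φ : ℕ → ℂ) (C A : ℝ) (hC : 0 < C) (hA : 0 < A)
    (hφ : ∀ n : ℕ, ‖φ n‖ ≤ C * A ^ n / ‖q‖ ^ (n * (n - 1) / 2))
    (hsum : HasSum φ 0) :
    ∃ C' : ℝ, 0 < C' ∧ ∀ n : ℕ,
      ‖∑ k ∈ Finset.range (n + 1), φ k‖ ≤ C' * A ^ n / ‖q‖ ^ (n * (n - 1) / 2) := by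
  set r := ‖q‖ with hr_def
  have hr0 : (0:ℝ) < r := lt_trans one_pos hq
  set g : ℕ → ℝ := fun m => A ^ m / r ^ (m * (m - 1) / 2) with hg
  have hgpos : ∀ m, 0 < g m := fun m => div_pos (pow_pos hA m) (pow_pos hr0 _)
  -- g is summable by the ratio test
  have hgsum : Summable g := by
    refine summable_of_ratio_test_tendsto_lt_one (l := 0) one_pos
      (Eventually.of_forall fun m => (hgpos m).ne') ?_
    have heq : ∀ m : ℕ, ‖g (m + 1)‖ / ‖g m‖ = A * r⁻¹ ^ m := by
      intro m
      have hT : (m + 1) * ((m + 1) - 1) / 2 = m * (m - 1) / 2 + m := by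
        have h1 := tri_mul m
        have h2 := tri_mul (m + 1)
        have h3 : (m + 1) * ((m + 1) - 1) = m * (m - 1) + 2 * m := by
          rcases m with _ | k
          · simp
          · simp only [Nat.add_sub_cancel]; ring
        omega
      rw [Real.norm_of_nonneg (hgpos (m+1)).le, Real.norm_of_nonneg (hgpos m).le, hg]
      simp only [hT, pow_add, pow_succ]
      rw [inv_pow]
      field_simp
    have hlim : Tendsto (fun m : ℕ => A * r⁻¹ ^ m) atTop (𝓝 0) := by
      have := (tendsto_pow_atTop_nhds_zero_of_lt_one (by positivity)
        (inv_lt_one_of_one_lt₀ hq)).const_mul A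
      simpa using this
    simpa only [heq] using hlim
  have hgsum' : Summable (fun i => g (i + 1)) := (summable_nat_add_iff 1).2 hgsum
  set S := ∑' i : ℕ, g (i + 1) with hS
  have hS0 : 0 ≤ S := tsum_nonneg fun i => (hgpos _).le
  refine ⟨C * (S + 1), by positivity, fun n => ?_⟩
  set D := C * A ^ n / r ^ (n * (n - 1) / 2) with hD
  have hD0 : 0 < D := by positivity
  -- the partial sum equals minus the tail
  have hkey : ∑ k ∈ Finset.range (n + 1), φ k = -∑' i, φ (i + (n + 1)) := by
    have h := Summable.sum_add_tsum_nat_add (n + 1) hsum.summable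
    rw [hsum.tsum_eq] at h
    exact eq_neg_of_add_eq_zero_left h
  -- termwise bound on the tail
  have hb : ∀ i : ℕ, ‖φ (i + (n + 1))‖ ≤ D * g (i + 1) := by
    intro i
    have h1 := hφ (i + (n + 1))
    have h2 : i + (n + 1) = i + n + 1 := by omega
    rw [h2] at h1
    refine h1.trans ?_
    have hle : r ^ (n * (n - 1) / 2) * r ^ ((i + 1) * ((i + 1) - 1) / 2)
        ≤ r ^ ((i + n + 1) * ((i + n + 1) - 1) / 2) := by
      rw [← pow_add]
      exact pow_le_pow_right₀ (le_of_lt hq) (tri_add n i)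
    have hAeq : A ^ (i + n + 1) = A ^ n * A ^ (i + 1) := by
      rw [← pow_add]; congr 1; omega
    rw [hD, hg]
    simp only
    rw [hAeq, div_mul_div_comm]
    rw [div_le_div_iff₀ (by positivity) (by positivity)] at *
    nlinarith [mul_le_mul_of_nonneg_left hle
      (show (0:ℝ) ≤ C * A ^ n * A ^ (i + 1) by positivity)]
  have hbsum : Summable (fun i : ℕ => D * g (i + 1)) := hgsum'.mul_left D
  have hnφ : Summable (fun i : ℕ => ‖φ (i + (n + 1))‖) :=
    Summable.of_nonneg_of_le (fun i => norm_nonneg _) hb hbsum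
  calc ‖∑ k ∈ Finset.range (n + 1), φ k‖ = ‖∑' i, φ (i + (n + 1))‖ := by
        rw [hkey, norm_neg]
    _ ≤ ∑' i, ‖φ (i + (n + 1))‖ := norm_tsum_le_tsum_norm hnφ
    _ ≤ ∑' i, D * g (i + 1) := Summable.tsum_le_tsum hb hnφ hbsum
    _ = D * S := by rw [tsum_mul_left]
    _ ≤ D * (S + 1) := by nlinarith
    _ = C * (S + 1) * A ^ n / r ^ (n * (n - 1) / 2) := by rw [hD]; ring
end

section
/- Let q ∈ ℂ with |q|>1. In the convergent case, the cokernel of the ℂ-linear operator f(z) ↦ f(qz) - z^{-1} f(z) on ℂ({z}) (convergent Laurent series) has dimension 1. -/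
/-- A formal Laurent series is convergent (meromorphic at 0) if its power series part
has positive radius of convergence (the principal part is automatically finite). -/
def IsConvL (f : LaurentSeries ℂ) : Prop :=
  ∃ r : ℝ, 0 < r ∧ Summable fun n : ℕ => ‖f.coeff (n : ℤ)‖ * r ^ n


def dz (k : ℤ) : ℤ := k * (k + 1) / 2

lemma two_dz (k : ℤ) : 2 * dz k = k * (k + 1) := by
  obtain ⟨m, hm⟩ := Int.even_mul_succ_self k
  have : k * (k+1) = 2 * m := by omega
  rw [dz, this, Int.mul_ediv_cancel_left _ (by norm_num)]

lemma dz_step (k : ℤ) : dz k = dz (k - 1) + k := by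
  have h1 := two_dz k; have h2 := two_dz (k - 1); nlinarith

lemma dz_succ (k : ℤ) : dz (k + 1) = dz k + (k + 1) := by
  have h := dz_step (k + 1); simp only [add_sub_cancel_right] at h; omega

lemma dz_zero : dz 0 = 0 := rfl

lemma sum_Ico_int (h : ℤ → ℂ) (N : ℤ) (m : ℕ) :
    ∑ k ∈ Finset.Ico N (N + (m:ℤ)), h k = ∑ i ∈ Finset.range m, h (N + (i:ℤ)) := by
  induction m with
  | zero => simp
  | succ m ih =>
    have hc : N + ((m+1:ℕ):ℤ) = (N + (m:ℤ)) + 1 := by push_cast; ring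
    have hins : Finset.Ico N (N + (m:ℤ) + 1) = insert (N + (m:ℤ)) (Finset.Ico N (N + (m:ℤ))) :=
      Finset.ext fun x => by simp only [Finset.mem_Ico, Finset.mem_insert]; omega
    rw [hc, hins, Finset.sum_insert Finset.right_notMem_Ico, ih, Finset.sum_range_succ]
    ring

lemma geom_dz_summable {A : ℝ} (hA : 1 < A) (c ρ : ℝ) (hρ : 0 < ρ) (b : ℤ) :
    Summable (fun i : ℕ => c * ρ ^ i * A ^ (-dz (b + i))) := by
  have hA0 : (0:ℝ) < A := lt_trans one_pos hA
  obtain ⟨K, hK⟩ := pow_unbounded_of_one_lt (2*ρ) hA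
  apply summable_of_ratio_norm_eventually_le (r := 1/2) (by norm_num)
  rw [Filter.eventually_atTop]
  refine ⟨(K - b).toNat, fun i hi => ?_⟩
  have hc : (b + ((i+1:ℕ):ℤ)) = (b + (i:ℤ)) + 1 := by push_cast; ring
  have hd : dz ((b + (i:ℤ)) + 1) = dz (b + i) + (b + i + 1) := dz_succ _
  have hpow : (2*ρ) < A ^ ((b:ℤ) + i + 1) := by
    refine lt_of_lt_of_le hK ?_
    rw [← zpow_natCast A K]
    exact zpow_le_zpow_right₀ hA.le (by omega)
  have hratio : ρ * A ^ (-((b:ℤ) + i + 1)) ≤ 1/2 := by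
    rw [zpow_neg, mul_inv_le_iff₀ (zpow_pos hA0 _)]
    nlinarith
  have heq : c * ρ ^ (i+1) * A ^ (-dz (b + ((i+1:ℕ):ℤ)))
      = (c * ρ ^ i * A ^ (-dz (b + (i:ℤ)))) * (ρ * A ^ (-((b:ℤ) + i + 1))) := by
    rw [hc, hd, neg_add, zpow_add₀ (ne_of_gt hA0)]
    ring
  rw [heq, norm_mul]
  have : ‖ρ * A ^ (-((b:ℤ) + i + 1))‖ = ρ * A ^ (-((b:ℤ) + i + 1)) :=
    Real.norm_of_nonneg (by positivity)
  rw [this]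
  calc ‖c * ρ ^ i * A ^ (-dz (b + (i:ℤ)))‖ * (ρ * A ^ (-((b:ℤ) + i + 1)))
      ≤ ‖c * ρ ^ i * A ^ (-dz (b + (i:ℤ)))‖ * (1/2) :=
        mul_le_mul_of_nonneg_left hratio (norm_nonneg _)
    _ = 1/2 * ‖c * ρ ^ i * A ^ (-dz (b + (i:ℤ)))‖ := by ring


lemma sigmaq_coeff (q : ℂ) (x : LaurentSeries ℂ) (n : ℤ) :
    (sigmaq q x).coeff n = q ^ n * x.coeff n := rfl

lemma singleMul_coeff (x : LaurentSeries ℂ) (n : ℤ) :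
    (HahnSeries.single (-1:ℤ) (1:ℂ) * x).coeff n = x.coeff (n+1) := by
  have := HahnSeries.coeff_single_mul_add (r := (1:ℂ)) (x := x) (a := n + 1) (b := (-1:ℤ))
  simpa using this

lemma Lcoeff (q : ℂ) (f : LaurentSeries ℂ) (n : ℤ) :
    (sigmaq q f - HahnSeries.single (-1 : ℤ) 1 * f).coeff n
      = q ^ n * f.coeff n - f.coeff (n + 1) := by
  rw [HahnSeries.coeff_sub]
  congr 1
  have := HahnSeries.coeff_single_mul_add (r := (1:ℂ)) (x := f) (a := n + 1) (b := (-1:ℤ))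
  simpa using this

lemma isConvL_L (q : ℂ) (hq : 1 < ‖q‖) (f : LaurentSeries ℂ) (hf : IsConvL f) :
    IsConvL (sigmaq q f - HahnSeries.single (-1 : ℤ) 1 * f) := by
  obtain ⟨r, hr, hs⟩ := hf
  have hA : (0:ℝ) < ‖q‖ := lt_trans one_pos hq
  refine ⟨r / ‖q‖, by positivity, ?_⟩
  refine Summable.of_nonneg_of_le (fun n => by positivity)
    (f := fun n : ℕ => ‖f.coeff (n:ℤ)‖ * r ^ n + (1/r) * (‖f.coeff ((n+1 : ℕ) : ℤ)‖ * r ^ (n+1))) ?_ ?_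
  · intro n
    rw [Lcoeff]
    have h1 : ‖q ^ (n:ℤ) * f.coeff n - f.coeff ((n:ℤ) + 1)‖
        ≤ ‖q‖ ^ n * ‖f.coeff n‖ + ‖f.coeff ((n:ℤ)+1)‖ := by
      refine (norm_sub_le _ _).trans ?_
      rw [norm_mul, norm_zpow, zpow_natCast]
    have h2 : ((n:ℤ) + 1) = ((n+1 : ℕ) : ℤ) := by push_cast; ring
    rw [h2] at h1 ⊢
    calc ‖q ^ (n:ℤ) * f.coeff n - f.coeff ((n+1:ℕ):ℤ)‖ * (r / ‖q‖) ^ n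
        ≤ (‖q‖ ^ n * ‖f.coeff n‖ + ‖f.coeff ((n+1:ℕ):ℤ)‖) * (r / ‖q‖) ^ n := by
          exact mul_le_mul_of_nonneg_right h1 (by positivity)
      _ = ‖f.coeff n‖ * r ^ n + ‖f.coeff ((n+1:ℕ):ℤ)‖ * (r / ‖q‖) ^ n := by
          have h3 : ‖q‖ ^ n * (r / ‖q‖) ^ n = r ^ n := by
            rw [div_pow, mul_comm, div_mul_eq_mul_div, mul_div_assoc,
              div_self (pow_ne_zero n hA.ne'), mul_one]
          calc (‖q‖ ^ n * ‖f.coeff (n:ℤ)‖ + ‖f.coeff ((n+1:ℕ):ℤ)‖) * (r / ‖q‖) ^ n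
              = ‖f.coeff (n:ℤ)‖ * (‖q‖ ^ n * (r / ‖q‖) ^ n)
                + ‖f.coeff ((n+1:ℕ):ℤ)‖ * (r / ‖q‖) ^ n := by ring
            _ = _ := by rw [h3]
      _ ≤ ‖f.coeff n‖ * r ^ n + (1/r) * (‖f.coeff ((n+1:ℕ):ℤ)‖ * r ^ (n+1)) := by
          have : (r / ‖q‖) ^ n ≤ r ^ n :=
            pow_le_pow_left₀ (by positivity) (by
              rw [div_le_iff₀ hA]; nlinarith) n
          have hrn : r ^ n = (1/r) * r ^ (n+1) := by field_simp; ring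
          have := mul_le_mul_of_nonneg_left this (norm_nonneg (f.coeff ((n+1:ℕ):ℤ)))
          nlinarith [norm_nonneg (f.coeff ((n+1:ℕ):ℤ)), pow_nonneg (le_of_lt hr) (n+1)]
  · exact hs.add (((summable_nat_add_iff 1).2 hs).mul_left (1/r))

lemma isConvL_sub {f g : LaurentSeries ℂ} (hf : IsConvL f) (hg : IsConvL g) :
    IsConvL (f - g) := by
  obtain ⟨r1, hr1, hs1⟩ := hf
  obtain ⟨r2, hr2, hs2⟩ := hg
  refine ⟨min r1 r2, lt_min hr1 hr2, ?_⟩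
  refine Summable.of_nonneg_of_le (fun n => by positivity)
    (f := fun n : ℕ => ‖f.coeff (n:ℤ)‖ * r1 ^ n + ‖g.coeff (n:ℤ)‖ * r2 ^ n) ?_ (hs1.add hs2)
  intro n
  rw [HahnSeries.coeff_sub]
  have h1 : (min r1 r2) ^ n ≤ r1 ^ n := pow_le_pow_left₀ (le_min hr1.le hr2.le) (min_le_left _ _) n
  have h2 : (min r1 r2) ^ n ≤ r2 ^ n := pow_le_pow_left₀ (le_min hr1.le hr2.le) (min_le_right _ _) n
  calc ‖f.coeff n - g.coeff n‖ * (min r1 r2) ^ n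
      ≤ (‖f.coeff n‖ + ‖g.coeff n‖) * (min r1 r2) ^ n :=
        mul_le_mul_of_nonneg_right (norm_sub_le _ _) (by positivity)
    _ = ‖f.coeff n‖ * (min r1 r2) ^ n + ‖g.coeff n‖ * (min r1 r2) ^ n := by ring
    _ ≤ ‖f.coeff n‖ * r1 ^ n + ‖g.coeff n‖ * r2 ^ n :=
        add_le_add (mul_le_mul_of_nonneg_left h1 (norm_nonneg _))
          (mul_le_mul_of_nonneg_left h2 (norm_nonneg _))

lemma isConvL_one : IsConvL (1 : LaurentSeries ℂ) := by
  refine ⟨1, one_pos, ?_⟩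
  refine summable_of_ne_finset_zero (s := {0}) ?_
  intro n hn
  simp only [Finset.mem_singleton] at hn
  rw [HahnSeries.coeff_one, if_neg (by exact_mod_cast hn)]
  simp


lemma coeff_bound (g : LaurentSeries ℂ) (r : ℝ) (hr : 0 < r)
    (hs : Summable fun n : ℕ => ‖g.coeff (n : ℤ)‖ * r ^ n) :
    ∃ C : ℝ, 0 ≤ C ∧ ∀ n : ℕ, ‖g.coeff (n:ℤ)‖ ≤ C * (1/r) ^ n := by
  refine ⟨∑' n : ℕ, ‖g.coeff (n:ℤ)‖ * r ^ n, tsum_nonneg (fun n => by positivity), fun n => ?_⟩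
  have h1 : ‖g.coeff (n:ℤ)‖ * r ^ n ≤ ∑' n : ℕ, ‖g.coeff (n:ℤ)‖ * r ^ n :=
    Summable.le_tsum hs n (fun j _ => by positivity)
  have h2 : (0:ℝ) < r ^ n := pow_pos hr n
  have h3 : (1/r : ℝ) ^ n = (r ^ n)⁻¹ := by rw [one_div, inv_pow]
  rw [h3, ← div_eq_mul_inv, le_div_iff₀ h2]
  exact h1

lemma summable_weight (q : ℂ) (hq : 1 < ‖q‖) (g : LaurentSeries ℂ) (r C : ℝ) (hr : 0 < r)
    (hCb : ∀ n : ℕ, ‖g.coeff (n:ℤ)‖ ≤ C * (1/r) ^ n) (b : ℤ) :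
    Summable (fun i : ℕ => ‖g.coeff (b + i) * q ^ (-dz (b + i))‖) := by
  have hA0 : (0:ℝ) < ‖q‖ := lt_trans one_pos hq
  have hC0 : 0 ≤ C := le_trans (norm_nonneg _) ((hCb 0).trans_eq (by norm_num))
  -- first the case 0 ≤ b
  have base : ∀ b : ℤ, 0 ≤ b → Summable (fun i : ℕ => ‖g.coeff (b + i) * q ^ (-dz (b + i))‖) := by
    intro b hb
    refine Summable.of_nonneg_of_le (fun i => norm_nonneg _)
      (f := fun i : ℕ => (C * (1/r) ^ b.toNat) * (1/r) ^ i * ‖q‖ ^ (-dz (b + i))) (fun i => ?_)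
      (geom_dz_summable hq _ _ (by positivity) b)
    rw [norm_mul, norm_zpow]
    have hcast : b + (i:ℤ) = ((b.toNat + i : ℕ) : ℤ) := by push_cast; omega
    have h1 : ‖g.coeff (b + i)‖ ≤ C * (1/r) ^ b.toNat * (1/r) ^ i := by
      rw [hcast]
      calc ‖g.coeff ((b.toNat + i : ℕ):ℤ)‖ ≤ C * (1/r) ^ (b.toNat + i) := hCb _
        _ = C * (1/r) ^ b.toNat * (1/r) ^ i := by rw [pow_add]; ring
    exact mul_le_mul_of_nonneg_right h1 (le_of_lt (zpow_pos hA0 _))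
  set k : ℕ := (-b).toNat with hk
  refine (summable_nat_add_iff k).1 ?_
  refine Summable.congr (f := fun i : ℕ => ‖g.coeff ((b + k) + i) * q ^ (-dz ((b + k) + i))‖)
    (base (b + k) (by omega)) (fun i => ?_)
  have hx : (b + (k:ℤ)) + (i:ℤ) = b + ((i + k : ℕ) : ℤ) := by push_cast; ring
  simp only [hx]

lemma no_conv_sol (q : ℂ) (hq : 1 < ‖q‖) (e : ℂ) (he : e ≠ 0) (h : LaurentSeries ℂ)
    (hconv : IsConvL h)
    (heq : sigmaq q h - HahnSeries.single (-1 : ℤ) 1 * h = e • 1) : False := by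
  have hA : (0:ℝ) < ‖q‖ := lt_trans one_pos hq
  have hq0 : q ≠ 0 := by intro h0; rw [h0, norm_zero] at hq; linarith
  have rel : ∀ k : ℤ, q ^ k * h.coeff k - h.coeff (k+1) = (if k = 0 then e else 0) := by
    intro k
    have := congrArg (fun x => HahnSeries.coeff x k) heq
    simp only [Lcoeff, HahnSeries.coeff_smul, HahnSeries.coeff_one, smul_eq_mul] at this
    rw [this]
    by_cases hk : k = 0 <;> simp [hk]
  set N : ℤ := min (h.order - 1) (-1) with hNdef
  have hN1 : N ≤ -1 := min_le_right _ _
  have hvanish : ∀ k : ℤ, k ≤ N → h.coeff k = 0 := by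
    intro k hk
    exact HahnSeries.coeff_eq_zero_of_lt_order (by
      have : N ≤ h.order - 1 := min_le_left _ _
      omega)
  have claim : ∀ j : ℕ, N + j ≤ 0 → h.coeff (N + j) = 0 := by
    intro j
    induction j with
    | zero => intro _; simpa using hvanish N le_rfl
    | succ j ih =>
      intro hj
      have hk : N + (j:ℤ) ≤ -1 := by push_cast at hj ⊢; omega
      have hrel := rel (N + j)
      rw [if_neg (by omega), ih (by omega), mul_zero, zero_sub, neg_eq_zero] at hrel
      have : N + ((j+1 : ℕ) : ℤ) = (N + j) + 1 := by push_cast; ring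
      rw [this]; exact hrel
  have h0 : h.coeff 0 = 0 := by
    have htn : ((-N).toNat : ℤ) = -N := Int.toNat_of_nonneg (by omega)
    have := claim (-N).toNat (by omega)
    rwa [htn, add_neg_cancel] at this
  have h1 : h.coeff 1 = -e := by
    have hrel := rel 0
    rw [if_pos rfl, h0, mul_zero, zero_sub, zero_add] at hrel
    rw [neg_eq_iff_eq_neg] at hrel; exact hrel
  have growth : ∀ j : ℕ, ‖h.coeff (1 + j)‖ = ‖e‖ * ‖q‖ ^ (dz j) := by
    intro j
    induction j with
    | zero =>
      simpa [dz_zero] using congrArg norm h1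
    | succ j ih =>
      have hrel := rel (1 + j)
      rw [if_neg (by omega), sub_eq_zero] at hrel
      have hc : (1 : ℤ) + ((j+1 : ℕ) : ℤ) = (1 + j) + 1 := by push_cast; ring
      rw [hc, ← hrel, norm_mul, norm_zpow, ih]
      have hd : dz ((j:ℤ)+1) = dz j + (1 + j) := by
        have h' := dz_step ((j:ℤ)+1)
        simp only [add_sub_cancel_right] at h'
        omega
      have hcast : ((j+1:ℕ):ℤ) = (j:ℤ)+1 := by push_cast; ring
      rw [hcast, hd, zpow_add₀ (ne_of_gt hA) (dz (j:ℤ)) (1+(j:ℤ))]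
      ring
  obtain ⟨r, hr, hs⟩ := hconv
  have htend : Filter.Tendsto (fun n : ℕ => ‖h.coeff (n:ℤ)‖ * r ^ n) Filter.atTop (nhds 0) :=
    hs.tendsto_atTop_zero
  have hepos : (0:ℝ) < ‖e‖ * r := by
    have : 0 < ‖e‖ := norm_pos_iff.mpr he
    positivity
  obtain ⟨J, hJ⟩ := Filter.eventually_atTop.mp (htend.eventually (gt_mem_nhds hepos))
  obtain ⟨K, hK⟩ := pow_unbounded_of_one_lt (1/r) hq
  have hKr : 1 ≤ ‖q‖ ^ K * r := by
    rw [div_lt_iff₀ hr] at hK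
    nlinarith
  set j : ℕ := max (2*K) J with hj
  have hJle : J ≤ 1 + j := by have h' := le_max_right (2*K) J; omega
  have hlt := hJ (1+j) hJle
  have hdzj : (K * j : ℤ) ≤ dz j := by
    have h2 := two_dz (j:ℤ)
    have hjK : (2*K : ℤ) ≤ j := by exact_mod_cast le_max_left (2*K) J
    nlinarith
  have hz1 : (‖q‖ ^ K) ^ j ≤ ‖q‖ ^ (dz j) := by
    have : ‖q‖ ^ ((K * j : ℕ) : ℤ) ≤ ‖q‖ ^ (dz j) := by
      apply zpow_le_zpow_right₀ (le_of_lt hq)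
      exact_mod_cast hdzj
    rw [zpow_natCast, pow_mul] at this
    exact this
  have hcast : ((1 + j : ℕ) : ℤ) = 1 + (j:ℤ) := by push_cast; ring
  have hge : ‖e‖ * r ≤ ‖h.coeff ((1+j : ℕ) : ℤ)‖ * r ^ (1+j) := by
    rw [hcast, growth j]
    have h1le : (1:ℝ) ≤ (‖q‖ ^ K * r) ^ j := one_le_pow₀ hKr
    have hmul : (‖q‖^K*r)^j = (‖q‖^K)^j * r^j := mul_pow _ _ _
    have hrj : r ^ (1+j) = r * r^j := by rw [pow_add, pow_one]
    have hrjpos : (0:ℝ) < r ^ j := pow_pos hr j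
    have hepos' : (0:ℝ) < ‖e‖ := norm_pos_iff.mpr he
    have s1 : (1:ℝ) ≤ ‖q‖ ^ dz (j:ℤ) * r ^ j :=
      le_trans h1le (by rw [hmul]; exact mul_le_mul_of_nonneg_right hz1 hrjpos.le)
    calc ‖e‖ * r = ‖e‖ * r * 1 := (mul_one _).symm
      _ ≤ ‖e‖ * r * (‖q‖ ^ dz (j:ℤ) * r ^ j) :=
          mul_le_mul_of_nonneg_left s1 (le_of_lt hepos)
      _ = ‖e‖ * ‖q‖ ^ dz (j:ℤ) * r ^ (1+j) := by rw [hrj]; ring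
  linarith


set_option maxHeartbeats 1000000 in
lemma exists_rep (q : ℂ) (hq : 1 < ‖q‖) (g : LaurentSeries ℂ) (hg : IsConvL g) :
    ∃ c : ℂ, ∃ f : LaurentSeries ℂ, IsConvL f ∧
      g = c • (1 : LaurentSeries ℂ) + (sigmaq q f - HahnSeries.single (-1 : ℤ) 1 * f) := by
  obtain ⟨r, hr, hs⟩ := hg
  have hA0 : (0:ℝ) < ‖q‖ := lt_trans one_pos hq
  have hq0 : q ≠ 0 := by intro h0; rw [h0, norm_zero] at hq; linarith
  obtain ⟨C, hC0, hCb⟩ := coeff_bound g r hr hs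
  set N : ℤ := min g.order 0 with hNdef
  have hN0 : N ≤ 0 := min_le_right _ _
  have hgv : ∀ k : ℤ, k < N → g.coeff k = 0 := fun k hk =>
    HahnSeries.coeff_eq_zero_of_lt_order (lt_of_lt_of_le hk (min_le_left _ _))
  have hsumC : ∀ b : ℤ, Summable (fun i : ℕ => g.coeff (b + i) * q ^ (-dz (b + i))) :=
    fun b => Summable.of_norm (summable_weight q hq g r C hr hCb b)
  set c : ℂ := ∑' i : ℕ, g.coeff (N + i) * q ^ (-dz (N + i)) with hcdef
  set G : ℤ → ℂ := fun k => g.coeff k - (if k = 0 then c else 0) with hGdef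
  have hGg : ∀ k : ℤ, k ≠ 0 → G k = g.coeff k := by
    intro k hk; simp only [hGdef, if_neg hk, sub_zero]
  have hGv : ∀ k : ℤ, k < N → G k = 0 := by
    intro k hk
    have : k ≠ 0 := by omega
    rw [hGg k this]; exact hgv k hk
  have hdelta : ∀ b : ℤ, Summable (fun i : ℕ => (if (b + (i:ℤ)) = 0 then c else 0) * q ^ (-dz (b + i))) := by
    intro b
    refine summable_of_ne_finset_zero (s := {(-b).toNat}) ?_
    intro i hi
    simp only [Finset.mem_singleton] at hi
    rw [if_neg (by omega), zero_mul]
  have hsumG : ∀ b : ℤ, Summable (fun i : ℕ => G (b + i) * q ^ (-dz (b + i))) := by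
    intro b
    refine Summable.congr ((hsumC b).sub (hdelta b)) (fun i => ?_)
    simp only [hGdef]; ring
  have hGnorm : ∀ b : ℤ, Summable (fun i : ℕ => ‖G (b + i) * q ^ (-dz (b + i))‖) :=
    fun b => summable_norm_iff.mpr (hsumG b)
  have hS0 : ∑' i : ℕ, G (N + i) * q ^ (-dz (N + i)) = 0 := by
    have hsplit : ∀ i : ℕ, G (N + i) * q ^ (-dz (N + i))
        = (g.coeff (N + i) * q ^ (-dz (N + i)))
          - ((if (N + (i:ℤ)) = 0 then c else 0) * q ^ (-dz (N + i))) := by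
      intro i; simp only [hGdef]; ring
    rw [tsum_congr hsplit, Summable.tsum_sub (hsumC N) (hdelta N)]
    have hδ : ∑' i : ℕ, (if (N + (i:ℤ)) = 0 then c else 0) * q ^ (-dz (N + i)) = c := by
      rw [tsum_eq_single (-N).toNat (fun i hi => by rw [if_neg (by omega), zero_mul])]
      have h1 : N + (((-N).toNat : ℕ) : ℤ) = 0 := by omega
      rw [h1, if_pos rfl]
      norm_num [dz_zero]
    rw [hδ, ← hcdef, sub_self]
  set F : ℤ → ℂ := fun n => -∑ k ∈ Finset.Ico N n, G k * q ^ (dz (n-1) - dz k) with hFdef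
  have hFzero : ∀ n : ℤ, n ≤ N → F n = 0 := by
    intro n hn
    simp only [hFdef]
    rw [Finset.Ico_eq_empty (by omega), Finset.sum_empty, neg_zero]
  have hFsupp : BddBelow (Function.support F) := by
    refine ⟨N, fun n hn => ?_⟩
    by_contra hcon
    exact hn (hFzero n (by omega))
  set f : LaurentSeries ℂ := HahnSeries.ofSuppBddBelow F hFsupp with hfdef
  have hfc : ∀ n : ℤ, f.coeff n = F n := fun n => rfl
  -- the functional equation
  have heq : g = c • (1 : LaurentSeries ℂ) + (sigmaq q f - HahnSeries.single (-1 : ℤ) 1 * f) := by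
    ext n
    rw [HahnSeries.coeff_add, Lcoeff, hfc, hfc, HahnSeries.coeff_smul, HahnSeries.coeff_one]
    by_cases hn : N ≤ n
    · have hqF : q ^ n * F n = -∑ k ∈ Finset.Ico N n, G k * q ^ (dz n - dz k) := by
        simp only [hFdef, mul_neg, Finset.mul_sum]
        congr 1
        refine Finset.sum_congr rfl (fun k _ => ?_)
        have hstep : dz n - dz k = n + (dz (n-1) - dz k) := by
          have := dz_step n; omega
        rw [hstep, zpow_add₀ hq0]; ring
      have hF1 : F (n+1) = -∑ k ∈ Finset.Ico N (n+1), G k * q ^ (dz n - dz k) := by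
        simp only [hFdef, add_sub_cancel_right]
      have hins : Finset.Ico N (n + 1) = insert n (Finset.Ico N n) :=
        Finset.ext fun x => by simp only [Finset.mem_Ico, Finset.mem_insert]; omega
      rw [hqF, hF1, hins, Finset.sum_insert Finset.right_notMem_Ico, sub_self,
        zpow_zero, mul_one]
      simp only [hGdef, smul_eq_mul]
      by_cases h0 : n = 0 <;> simp only [h0, if_pos, if_neg, ite_true, ite_false] <;> ring_nf <;>
        simp [h0] <;> ring
    · push_neg at hn
      rw [hFzero n (by omega), hFzero (n+1) (by omega), hgv n hn, if_neg (by omega)]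
      simp
  -- tail formula for F
  have htail : ∀ n : ℤ, N ≤ n →
      F n = q ^ (dz (n-1)) * ∑' i : ℕ, G (n + i) * q ^ (-dz (n + i)) := by
    intro n hn
    have hNm : N + ((n - N).toNat : ℤ) = n := by omega
    set m : ℕ := (n - N).toNat with hm
    have h1 : F n = -(q ^ (dz (n-1)) * ∑ k ∈ Finset.Ico N n, G k * q ^ (-dz k)) := by
      simp only [hFdef]
      congr 1
      rw [Finset.mul_sum]
      refine Finset.sum_congr rfl (fun k _ => ?_)
      rw [show dz (n-1) - dz k = dz (n-1) + (-dz k) from by ring, zpow_add₀ hq0]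
      ring
    have h2 : ∑ k ∈ Finset.Ico N n, G k * q ^ (-dz k)
        = ∑ i ∈ Finset.range m, G (N + i) * q ^ (-dz (N + i)) := by
      conv_lhs => rw [← hNm]
      exact sum_Ico_int (fun k => G k * q ^ (-dz k)) N m
    have h3 := (hsumG N).sum_add_tsum_nat_add m
    rw [hS0] at h3
    have h5 : ∑ i ∈ Finset.range m, G (N + i) * q ^ (-dz (N + i))
        = -∑' i : ℕ, G (n + i) * q ^ (-dz (n + i)) := by
      rw [eq_neg_of_add_eq_zero_left h3]
      congr 1
      exact tsum_congr (fun i => by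
        rw [show N + ((i + m : ℕ):ℤ) = n + i from by push_cast; omega])
    rw [h1, h2, h5, mul_neg, neg_neg]
  -- geometric-type bound on F for large indices
  obtain ⟨M₀, hM₀⟩ := pow_unbounded_of_one_lt (2/r) hq
  set M₁ : ℕ := max M₀ 1 with hM₁def
  have hhalf : (1/r) * ((‖q‖ ^ M₀)⁻¹) ≤ 1/2 := by
    have hp : (0:ℝ) < ‖q‖ ^ M₀ := pow_pos hA0 _
    have hrx : 2 < r * ‖q‖^M₀ := by
      rw [div_lt_iff₀ hr] at hM₀; nlinarith
    rw [one_div, ← mul_inv]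
    calc (r * ‖q‖^M₀)⁻¹ ≤ (2:ℝ)⁻¹ := by
          apply inv_anti₀ (by norm_num) (le_of_lt hrx)
      _ = 1/2 := by norm_num
  have hkey : ∀ (n i : ℕ), M₁ ≤ n →
      dz ((n:ℤ) - 1) + n + M₀ * i ≤ dz ((n:ℤ) + i) := by
    intro n i hn
    have h1 := two_dz ((n:ℤ) + i)
    have h2 := two_dz ((n:ℤ) - 1)
    have hn1 : (1:ℤ) ≤ (n:ℤ) := by exact_mod_cast le_trans (le_max_right M₀ 1) hn
    have hnM : (M₀:ℤ) ≤ (n:ℤ) := by exact_mod_cast le_trans (le_max_left M₀ 1) hn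
    have hi : (0:ℤ) ≤ (i:ℤ) := Int.natCast_nonneg i
    nlinarith [mul_le_mul_of_nonneg_right hnM hi, sq_nonneg ((i:ℤ))]
  have hFb : ∀ n : ℕ, M₁ ≤ n → ‖F (n:ℤ)‖ ≤ 2*C * (1/r)^n * (‖q‖⁻¹) ^ n := by
    intro n hn
    have hn1 : 1 ≤ n := le_trans (le_max_right M₀ 1) hn
    have hNn : N ≤ (n:ℤ) := le_trans hN0 (Int.natCast_nonneg n)
    rw [htail n hNn, norm_mul, norm_zpow]
    set D : ℝ := C * (1/r)^n * ‖q‖ ^ (-dz ((n:ℤ)-1) - n) with hD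
    have hD0 : 0 ≤ D := by rw [hD]; positivity
    have hterm : ∀ i : ℕ, ‖G ((n:ℤ) + i) * q ^ (-dz ((n:ℤ) + i))‖ ≤ D * (1/2)^i := by
      intro i
      rw [norm_mul, norm_zpow]
      have hni0 : ((n:ℤ) + i) ≠ 0 := by
        have : (1:ℤ) ≤ (n:ℤ) := by exact_mod_cast hn1
        omega
      rw [hGg _ hni0]
      have hg1 : ‖g.coeff ((n:ℤ) + i)‖ ≤ C * (1/r)^(n+i) := by
        rw [show (n:ℤ) + i = ((n + i : ℕ):ℤ) from by push_cast; ring]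
        exact hCb (n+i)
      have hz : ‖q‖ ^ (-dz ((n:ℤ) + i)) ≤ ‖q‖ ^ (-dz ((n:ℤ)-1) - n - M₀ * i) :=
        zpow_le_zpow_right₀ (le_of_lt hq) (by have := hkey n i hn; omega)
      have hzsplit : ‖q‖ ^ (-dz ((n:ℤ)-1) - (n:ℤ) - M₀ * i)
          = ‖q‖ ^ (-dz ((n:ℤ)-1) - n) * ((‖q‖ ^ M₀)⁻¹)^i := by
        rw [show -dz ((n:ℤ)-1) - (n:ℤ) - (M₀:ℤ) * i = (-dz ((n:ℤ)-1) - n) + (-((M₀:ℤ) * i))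
            from by ring, zpow_add₀ (ne_of_gt hA0)]
        congr 1
        rw [zpow_neg, show ((M₀:ℤ) * i) = ((M₀ * i : ℕ) : ℤ) from by push_cast; ring,
          zpow_natCast, pow_mul, ← inv_pow]
      calc ‖g.coeff ((n:ℤ)+i)‖ * ‖q‖ ^ (-dz ((n:ℤ)+i))
          ≤ (C * (1/r)^(n+i)) * (‖q‖ ^ (-dz ((n:ℤ)-1) - n) * ((‖q‖^M₀)⁻¹)^i) :=
            mul_le_mul hg1 (le_trans hz (le_of_eq hzsplit)) (le_of_lt (zpow_pos hA0 _))
              (by positivity)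
        _ = D * ((1/r) * ((‖q‖^M₀)⁻¹))^i := by rw [hD, pow_add, mul_pow]; ring
        _ ≤ D * (1/2)^i :=
            mul_le_mul_of_nonneg_left (pow_le_pow_left₀ (by positivity) hhalf i) hD0
    have hmaj : Summable (fun i : ℕ => D * (1/2 : ℝ)^i) :=
      (summable_geometric_of_lt_one (by norm_num) (by norm_num)).mul_left D
    have h6 := norm_tsum_le_tsum_norm (hGnorm (n:ℤ))
    have h7 := Summable.tsum_le_tsum hterm (hGnorm (n:ℤ)) hmaj
    have h8 : ∑' i : ℕ, D * (1/2 : ℝ)^i = D * 2 := by rw [tsum_mul_left, tsum_geometric_two]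
    have h9 : ‖q‖ ^ (dz ((n:ℤ)-1)) * (D * 2) = 2*C*(1/r)^n * (‖q‖⁻¹) ^ n := by
      have hzz : ‖q‖ ^ (dz ((n:ℤ)-1)) ≠ 0 := zpow_ne_zero _ (ne_of_gt hA0)
      have e1 : ‖q‖ ^ (-dz ((n:ℤ)-1) - (n:ℤ)) = (‖q‖ ^ (dz ((n:ℤ)-1)))⁻¹ * (‖q‖⁻¹)^n := by
        rw [show -dz ((n:ℤ)-1) - (n:ℤ) = -(dz ((n:ℤ)-1) + (n:ℤ)) from by ring, zpow_neg,
          zpow_add₀ (ne_of_gt hA0), mul_inv, zpow_natCast, inv_pow]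
      rw [hD, e1]
      linear_combination (2*C*(1/r)^n*(‖q‖⁻¹)^n) * (mul_inv_cancel₀ hzz)
    calc ‖q‖ ^ dz ((n:ℤ)-1) * ‖∑' i : ℕ, G ((n:ℤ) + i) * q ^ (-dz ((n:ℤ) + i))‖
        ≤ ‖q‖ ^ dz ((n:ℤ)-1) * (D * 2) :=
          mul_le_mul_of_nonneg_left (le_trans h6 (h7.trans_eq h8)) (le_of_lt (zpow_pos hA0 _))
      _ = 2*C*(1/r)^n * (‖q‖⁻¹) ^ n := h9
  have hconvf : IsConvL f := by
    refine ⟨r, hr, ?_⟩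
    refine (summable_nat_add_iff M₁).1 ?_
    have hinv1 : ‖q‖⁻¹ < 1 := inv_lt_one_of_one_lt₀ hq
    refine Summable.of_nonneg_of_le (fun n => by positivity) (fun n => ?_)
      (f := fun n : ℕ => (2*C*(‖q‖⁻¹)^M₁) * (‖q‖⁻¹)^n)
      ((summable_geometric_of_lt_one (by positivity) hinv1).mul_left _)
    rw [hfc]
    have hb := hFb (n + M₁) (by omega)
    have hr1 : ((1:ℝ)/r)^(n+M₁) * r^(n+M₁) = 1 := by
      rw [one_div, inv_pow, inv_mul_cancel₀ (pow_ne_zero _ (ne_of_gt hr))]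
    calc ‖F ((n+M₁ : ℕ):ℤ)‖ * r^(n+M₁)
        ≤ (2*C*(1/r)^(n+M₁)*(‖q‖⁻¹)^(n+M₁)) * r^(n+M₁) :=
          mul_le_mul_of_nonneg_right hb (by positivity)
      _ = 2*C*(‖q‖⁻¹)^(n+M₁) * ((1/r)^(n+M₁) * r^(n+M₁)) := by ring
      _ = (2*C*(‖q‖⁻¹)^M₁) * (‖q‖⁻¹)^n := by rw [hr1, mul_one, pow_add]; ring
  exact ⟨c, f, hconvf, heq⟩


theorem stmt_12 (q : ℂ) (hq : 1 < ‖q‖) :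
    ∃ w : LaurentSeries ℂ, IsConvL w ∧
      (∀ f : LaurentSeries ℂ, IsConvL f →
        IsConvL (sigmaq q f - HahnSeries.single (-1 : ℤ) 1 * f)) ∧
      (∀ g : LaurentSeries ℂ, IsConvL g → ∃! c : ℂ, ∃ f : LaurentSeries ℂ,
        IsConvL f ∧ g = c • w + (sigmaq q f - HahnSeries.single (-1 : ℤ) 1 * f)) := by
  refine ⟨1, isConvL_one, fun f hf => isConvL_L q hq f hf, fun g hg => ?_⟩
  obtain ⟨c, f, hcf, heq⟩ := exists_rep q hq g hg
  refine ⟨c, ⟨f, hcf, heq⟩, ?_⟩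
  rintro c' ⟨f', hf', heq'⟩
  by_contra hne
  have key : sigmaq q (f' - f) - HahnSeries.single (-1 : ℤ) 1 * (f' - f)
      = (c - c') • (1 : LaurentSeries ℂ) := by
    ext n
    have e1 := congrArg (fun x => HahnSeries.coeff x n) (heq.symm.trans heq')
    simp only [HahnSeries.coeff_add, HahnSeries.coeff_sub, sigmaq_coeff, singleMul_coeff,
      HahnSeries.coeff_smul, HahnSeries.coeff_one, smul_eq_mul] at e1 ⊢
    linear_combination -e1
  exact no_conv_sol q hq (c - c') (sub_ne_zero.mpr (Ne.symm hne)) (f' - f)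
    (isConvL_sub hf' hcf) key
end

section
/- Under the hypotheses of the preceding statement, assume additionally there exist A > 0 with |F_0(q^l)| ≥ A|q|^{ln} for l ≥ 1, and B, C > 0 with |a_{i,j}| ≤ B C^j for all i,j and deg F_j ≤ n. Then the unique formal solution f with f(0)=1 satisfies |f_l| ≤ (C(D+1)/|q|^n)^l where D = (n+1)B/A; in particular f is a convergent power series (Adams' lemma, slope-0 case). -/
/-- `F_j(X) = Σ_{i=0}^n a_{i,j} X^i`, the polynomial of the `j`-th slice of the
Newton polygon of `P = Σ a_i σ_q^i`. -/
noncomputable def newtonSlice (n : ℕ) (a : ℕ → ℕ → ℂ) (j : ℕ) (x : ℂ) : ℂ :=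
  ∑ i ∈ Finset.range (n + 1), a i j * x ^ i

theorem stmt_16 (q : ℂ) (hq : 1 < ‖q‖) (n : ℕ) (a : ℕ → ℕ → ℂ)
    (hchar : newtonSlice n a 0 1 = 0)
    (hnr : ∀ m : ℕ, 1 ≤ m → newtonSlice n a 0 (q ^ m) ≠ 0)
    (A : ℝ) (hA : 0 < A)
    (hlow : ∀ l : ℕ, 1 ≤ l → A * ‖q‖ ^ (l * n) ≤ ‖newtonSlice n a 0 (q ^ l)‖)
    (B C : ℝ) (hB : 0 < B) (hC : 0 < C)
    (hcoef : ∀ i j : ℕ, ‖a i j‖ ≤ B * C ^ j)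
    (f : ℕ → ℂ) (hf0 : f 0 = 1)
    (hrec : ∀ l : ℕ, ∑ m ∈ Finset.range (l + 1), newtonSlice n a (l - m) (q ^ m) * f m = 0) :
    ∀ l : ℕ, ‖f l‖ ≤ (C * ((n + 1) * B / A + 1) / ‖q‖ ^ n) ^ l := by
  have hq1 : (1:ℝ) ≤ ‖q‖ := le_of_lt hq
  have hqpos : (0:ℝ) < ‖q‖ := lt_trans one_pos hq
  set D : ℝ := ((n:ℝ) + 1) * B / A with hD
  have hDpos : 0 < D := by positivity
  set R : ℝ := C * (D + 1) / ‖q‖ ^ n with hR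
  have hRpos : 0 < R := by positivity
  clear_value D R
  -- slice norm bound
  have hslice : ∀ j m : ℕ, ‖newtonSlice n a j (q ^ m)‖ ≤ ((n:ℝ)+1) * B * C ^ j * ‖q‖ ^ (n * m) := by
    intro j m
    unfold newtonSlice
    calc ‖∑ i ∈ Finset.range (n+1), a i j * (q^m)^i‖
        ≤ ∑ i ∈ Finset.range (n+1), ‖a i j * (q^m)^i‖ := norm_sum_le _ _
      _ ≤ ∑ i ∈ Finset.range (n+1), B * C ^ j * ‖q‖ ^ (n*m) := by
          apply Finset.sum_le_sum
          intro i hi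
          rw [norm_mul]
          have hin : i ≤ n := Nat.lt_succ_iff.mp (Finset.mem_range.mp hi)
          have h1 : ‖(q^m)^i‖ ≤ ‖q‖^(n*m) := by
            rw [← pow_mul, norm_pow]
            exact pow_le_pow_right₀ hq1
              (by calc m * i ≤ m * n := Nat.mul_le_mul_left _ hin
                    _ = n * m := Nat.mul_comm _ _)
          exact mul_le_mul (hcoef i j) h1 (norm_nonneg _) (by positivity)
      _ = ((n:ℝ)+1) * B * C^j * ‖q‖^(n*m) := by
          rw [Finset.sum_const, Finset.card_range]
          push_cast; ring
  intro l
  induction l using Nat.strong_induction_on with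
  | _ l ih =>
    match l, ih with
    | 0, _ => simp [hf0]
    | Nat.succ k, ih =>
      set l := k + 1 with hl
      have hl1 : 1 ≤ l := Nat.succ_le_succ (Nat.zero_le _)
      have hrl := hrec l
      rw [Finset.sum_range_succ, Nat.sub_self] at hrl
      have heq : newtonSlice n a 0 (q^l) * f l =
          -∑ m ∈ Finset.range l, newtonSlice n a (l-m) (q^m) * f m := by
        linear_combination hrl
      -- key inequality on the sum
      have hsum : ‖∑ m ∈ Finset.range l, newtonSlice n a (l-m) (q^m) * f m‖
          ≤ A * C^l * ((D+1)^l - 1) := by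
        calc ‖∑ m ∈ Finset.range l, newtonSlice n a (l-m) (q^m) * f m‖
            ≤ ∑ m ∈ Finset.range l, ‖newtonSlice n a (l-m) (q^m) * f m‖ := norm_sum_le _ _
          _ ≤ ∑ m ∈ Finset.range l, A * D * C^l * (D+1)^m := by
              apply Finset.sum_le_sum
              intro m hm
              have hml : m < l := Finset.mem_range.mp hm
              rw [norm_mul]
              have h1 := hslice (l - m) m
              have h2 := ih m hml
              have h3 : ‖newtonSlice n a (l-m) (q^m)‖ * ‖f m‖
                  ≤ (((n:ℝ)+1) * B * C^(l-m) * ‖q‖^(n*m)) * R^m := by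
                apply mul_le_mul h1 h2 (norm_nonneg _) (by positivity)
              have hCsplit : C^(l-m) * C^m = C^l := by
                rw [← pow_add, Nat.sub_add_cancel hml.le]
              have hRm : R^m = C^m * (D+1)^m / ‖q‖^(n*m) := by
                rw [hR, div_pow, mul_pow, pow_mul]
              have hAD : ((n:ℝ)+1) * B = A * D := by
                rw [hD]; field_simp
              have hqnm : (‖q‖^(n*m)) ≠ 0 := by positivity
              have e1 : ((n:ℝ)+1)*B*C^(l-m)*‖q‖^(n*m) * R^m
                  = A*D*(C^(l-m)*C^m)*(D+1)^m * (‖q‖^(n*m)/‖q‖^(n*m)) := by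
                rw [hRm, hAD]; ring
              rw [div_self hqnm, mul_one, hCsplit] at e1
              exact h3.trans_eq e1
          _ = A * D * C^l * ∑ m ∈ Finset.range l, (D+1)^m := by
              rw [Finset.mul_sum]
          _ = A * C^l * ((D+1)^l - 1) := by
              have := geom_sum_mul (D+1) l
              have h : (∑ m ∈ Finset.range l, (D+1)^m) * D = (D+1)^l - 1 := by
                simpa using this
              linear_combination (A * C^l) * h
      have hfl : A * ‖q‖ ^ (l * n) * ‖f l‖ ≤ A * C^l * ((D+1)^l - 1) := by
        calc A * ‖q‖ ^ (l * n) * ‖f l‖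
            ≤ ‖newtonSlice n a 0 (q^l)‖ * ‖f l‖ :=
              mul_le_mul_of_nonneg_right (hlow l hl1) (norm_nonneg _)
          _ = ‖newtonSlice n a 0 (q^l) * f l‖ := (norm_mul _ _).symm
          _ = ‖∑ m ∈ Finset.range l, newtonSlice n a (l-m) (q^m) * f m‖ := by
              rw [heq, norm_neg]
          _ ≤ A * C^l * ((D+1)^l - 1) := hsum
      -- conclude
      have hfin : A * ‖q‖ ^ (l * n) * ‖f l‖ ≤ A * ‖q‖ ^ (l * n) * R^l := by
        have hRl : ‖q‖^(l*n) * R^l = C^l * (D+1)^l := by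
          rw [hR, div_pow, mul_pow, ← pow_mul, Nat.mul_comm n l]
          field_simp
        have h4 : A * ‖q‖ ^ (l*n) * R^l = A * (C^l * (D+1)^l) := by
          rw [mul_assoc, hRl]
        rw [h4]
        nlinarith [hfl, mul_pos hA (pow_pos hC l)]
      have hpos : (0:ℝ) < A * ‖q‖ ^ (l * n) := by positivity
      exact le_of_mul_le_mul_left (by simpa [mul_assoc] using hfin) hpos
end

section
/- Let q ∈ ℂ with |q|>1, μ a positive integer, A_0 ∈ GL_n(ℂ). Then the map X ↦ σ_q X - z^μ A_0 X is bijective on ℂ((z))^n, and for convergent Y the unique formal solution X = Σ_{k≥1} q^{-μk(k+1)/2} z^{μk} A_0^k σ_q^{-k-1} Y converges wherever Y does. -/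
set_option maxHeartbeats 1000000


lemma Tcoeff (q : ℂ) (μ : ℤ) {n : ℕ} (A0 : Matrix (Fin n) (Fin n) ℂ)
    (X : Fin n → LaurentSeries ℂ) (i : Fin n) (m : ℤ) :
    (sigmaq q (X i) - HahnSeries.single μ (1:ℂ) * ∑ j, HahnSeries.single (0:ℤ) (A0 i j) * X j).coeff m
      = q ^ m * (X i).coeff m - ∑ j, A0 i j * (X j).coeff (m - μ) := by
  have hs : ∀ S : LaurentSeries ℂ, (HahnSeries.single μ (1:ℂ) * S).coeff m = S.coeff (m - μ) := by
    intro S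
    have h := HahnSeries.coeff_single_mul_add (r := (1:ℂ)) (x := S) (a := m - μ) (b := μ)
    rw [show m - μ + μ = m by ring, one_mul] at h
    exact h
  rw [HahnSeries.coeff_sub, hs]
  congr 1
  exact (map_sum (HahnSeries.coeff.addMonoidHom (m - μ)) _ _).trans
    (Finset.sum_congr rfl fun j _ => HahnSeries.coeff_single_zero_mul)

lemma exists_lb {n : ℕ} (Y : Fin n → LaurentSeries ℂ) :
    ∃ N : ℤ, ∀ i, ∀ m : ℤ, m < N → (Y i).coeff m = 0 := by
  obtain ⟨N, hN⟩ := (Set.finite_range fun i => (Y i).order).bddBelow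
  exact ⟨N, fun i m hm =>
    HahnSeries.coeff_eq_zero_of_lt_order (lt_of_lt_of_le hm (hN (Set.mem_range_self i)))⟩

noncomputable def solC (q : ℂ) (N : ℤ) (μ' : ℕ) {n : ℕ} (A : Matrix (Fin n) (Fin n) ℂ)
    (Y : Fin n → LaurentSeries ℂ) : ℕ → Fin n → ℂ
  | k => (q ^ (N + (k : ℤ)))⁻¹ • ((fun i => (Y i).coeff (N + (k : ℤ))) +
      A.mulVec (if 0 < μ' ∧ μ' ≤ k then solC q N μ' A Y (k - μ') else 0))
  termination_by k => k
  decreasing_by omega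

theorem stmt_17 (q : ℂ) (hq : 1 < ‖q‖) (μ : ℤ) (hμ : 0 < μ) (n : ℕ)
    (A0 : Matrix (Fin n) (Fin n) ℂ) (hA0 : IsUnit A0.det) :
    Function.Bijective (fun X : Fin n → LaurentSeries ℂ => fun i =>
      sigmaq q (X i) - HahnSeries.single μ (1 : ℂ) * ∑ j, HahnSeries.single (0 : ℤ) (A0 i j) * X j) ∧
    ∀ X Y : Fin n → LaurentSeries ℂ,
      (∀ i, sigmaq q (X i) -
        HahnSeries.single μ (1 : ℂ) * ∑ j, HahnSeries.single (0 : ℤ) (A0 i j) * X j = Y i) →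
      ∀ r : ℝ, 0 < r →
        (∀ i, Summable fun m : ℕ => ‖(Y i).coeff (m : ℤ)‖ * r ^ m) →
        (∀ i, Summable fun m : ℕ => ‖(X i).coeff (m : ℤ)‖ * r ^ m) := by
  constructor
  · -- bijectivity
    have hq0 : q ≠ 0 := fun h => by simp [h] at hq; linarith
    have hqm : ∀ m : ℤ, q ^ m ≠ 0 := fun m => zpow_ne_zero m hq0
    constructor
    · -- injective
      intro X X' hXX'
      set z : Fin n → ℤ → ℂ := fun i m => (X i).coeff m - (X' i).coeff m with hz
      have hrec : ∀ i m, q ^ m * z i m = ∑ j, A0 i j * z j (m - μ) := by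
        intro i m
        have h1 := congrArg (fun F => (F i).coeff m) hXX'
        simp only [Tcoeff] at h1
        simp only [hz, mul_sub, Finset.sum_sub_distrib]
        linear_combination h1
      -- lower bound for both
      obtain ⟨N, hN⟩ := exists_lb (fun p : Fin n => X p - X' p)
      have hNz : ∀ i, ∀ m : ℤ, m < N → z i m = 0 := by
        intro i m hm
        have := hN i m hm
        rwa [HahnSeries.coeff_sub] at this
      have key : ∀ k : ℕ, ∀ i, z i (N + k) = 0 := by
        intro k
        induction k using Nat.strong_induction_on with
        | _ k ih =>
          intro i
          have h2 := hrec i (N + k)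
          have hsum : ∑ j, A0 i j * z j (N + k - μ) = 0 := by
            apply Finset.sum_eq_zero
            intro j _
            rcases lt_or_ge (N + (k : ℤ) - μ) N with h | h
            · rw [hNz j _ h, mul_zero]
            · have hk : (N : ℤ) + k - μ = N + ((k - μ.toNat : ℕ) : ℤ) := by omega
              have hlt : k - μ.toNat < k := by omega
              rw [hk, ih _ hlt j, mul_zero]
          rw [hsum] at h2
          exact (mul_eq_zero.mp h2).resolve_left (hqm _)
      funext i
      ext m
      rcases lt_or_ge m N with h | h
      · have := hNz i m h
        simp only [hz] at this
        linear_combination this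
      · have hm : m = N + ((m - N).toNat : ℤ) := by omega
        have := key (m - N).toNat i
        rw [← hm] at this
        simp only [hz] at this
        linear_combination this
    · -- surjective
      intro Y
      obtain ⟨N, hN⟩ := exists_lb Y
      set μ' := μ.toNat with hμ'
      have hμc : (μ' : ℤ) = μ := Int.toNat_of_nonneg hμ.le
      have hμ'pos : 0 < μ' := by omega
      set c : Fin n → ℤ → ℂ := fun i m => if N ≤ m then solC q N μ' A0 Y (m - N).toNat i else 0
        with hc
      have hpwo : ∀ i : Fin n, (Function.support (c i)).IsPWO := by
        intro i
        have hsub : Function.support (c i) ⊆ Set.Ici N := by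
          intro m hm
          simp only [Function.mem_support, hc] at hm
          by_contra h
          exact hm (if_neg (fun h' => h h'))
        exact Set.IsWF.isPWO ((bddBelow_Ici.mono hsub).wellFoundedOn_lt)
      set X : Fin n → LaurentSeries ℂ := fun i => ⟨c i, hpwo i⟩ with hX
      refine ⟨X, ?_⟩
      funext i
      ext m
      rw [Tcoeff]
      have hXc : ∀ j m', (X j).coeff m' = c j m' := fun j m' => rfl
      simp only [hXc, hc]
      rcases lt_or_ge m N with h | h
      · rw [hN i m h]
        rw [if_neg (not_le.mpr h)]
        simp only [if_neg (not_le.mpr (by omega : m - μ < N)), mul_zero]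
        simp
      · set k := (m - N).toNat with hk
        have hmk : N + (k : ℤ) = m := by omega
        rw [if_pos h]
        have hunf : solC q N μ' A0 Y k = (q ^ m)⁻¹ • ((fun i => (Y i).coeff m) +
            A0.mulVec (if 0 < μ' ∧ μ' ≤ k then solC q N μ' A0 Y (k - μ') else 0)) := by
          rw [solC, hmk]
        set w : Fin n → ℂ := if 0 < μ' ∧ μ' ≤ k then solC q N μ' A0 Y (k - μ') else 0 with hw
        have hw' : ∀ j, (if N ≤ m - μ then solC q N μ' A0 Y (m - μ - N).toNat j else 0) = w j := by
          intro j
          rcases le_or_gt N (m - μ) with h2 | h2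
          · rw [if_pos h2, hw, if_pos ⟨hμ'pos, by omega⟩]
            congr 2
            omega
          · rw [if_neg (not_le.mpr h2), hw, if_neg (by push_neg; intro _; omega)]
            simp
        have hsum : ∑ j, A0 i j * (if N ≤ m - μ then solC q N μ' A0 Y (m - μ - N).toNat j else 0)
            = A0.mulVec w i := by
          simp only [Matrix.mulVec, dotProduct]
          exact Finset.sum_congr rfl fun j _ => by rw [hw' j]
        rw [hsum, hunf]
        simp only [Pi.smul_apply, Pi.add_apply, smul_eq_mul]
        field_simp
        ring
  · -- summability
    intro X Y hXY r hr hY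
    have hq0 : (0:ℝ) < ‖q‖ := lt_trans one_pos hq
    set μ' := μ.toNat with hμ'
    have hμc : (μ' : ℤ) = μ := Int.toNat_of_nonneg hμ.le
    have hμ'pos : 0 < μ' := by omega
    set x : ℤ → ℝ := fun m => ∑ i, ‖(X i).coeff m‖ with hx
    set y : ℤ → ℝ := fun m => ∑ i, ‖(Y i).coeff m‖ with hy
    set a : ℝ := ∑ i, ∑ j, ‖A0 i j‖ with ha
    have hxnn : ∀ m, 0 ≤ x m := fun m => Finset.sum_nonneg fun i _ => norm_nonneg _
    have hynn : ∀ m, 0 ≤ y m := fun m => Finset.sum_nonneg fun i _ => norm_nonneg _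
    have hann : 0 ≤ a := Finset.sum_nonneg fun i _ => Finset.sum_nonneg fun j _ => norm_nonneg _
    -- the coefficient recursion
    have hR : ∀ i m, q ^ m * (X i).coeff m = (Y i).coeff m + ∑ j, A0 i j * (X j).coeff (m - μ) := by
      intro i m
      have h1 := congrArg (fun F => F.coeff m) (hXY i)
      simp only [Tcoeff] at h1
      linear_combination h1
    have hkey : ∀ m : ℤ, ‖q‖ ^ m * x m ≤ y m + a * x (m - μ) := by
      intro m
      have h1 : ‖q‖ ^ m * x m = ∑ i, ‖q ^ m * (X i).coeff m‖ := by
        rw [hx, Finset.mul_sum]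
        exact Finset.sum_congr rfl fun i _ => by rw [norm_mul, norm_zpow]
      rw [h1]
      calc ∑ i, ‖q ^ m * (X i).coeff m‖
          ≤ ∑ i, (‖(Y i).coeff m‖ + ∑ j, ‖A0 i j‖ * ‖(X j).coeff (m - μ)‖) := by
            apply Finset.sum_le_sum
            intro i _
            rw [hR i m]
            refine le_trans (norm_add_le _ _) (add_le_add_right ?_ _)
            refine le_trans (norm_sum_le _ _) ?_
            exact Finset.sum_le_sum fun j _ => le_of_eq (norm_mul _ _)
        _ ≤ y m + a * x (m - μ) := by
            rw [Finset.sum_add_distrib]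
            refine add_le_add_right ?_ _
            rw [ha, Finset.sum_mul]
            apply Finset.sum_le_sum
            intro i _
            rw [Finset.sum_mul]
            apply Finset.sum_le_sum
            intro j _
            refine mul_le_mul_of_nonneg_left ?_ (norm_nonneg _)
            exact Finset.single_le_sum (fun p _ => norm_nonneg ((X p).coeff (m-μ))) (Finset.mem_univ j)
    set s : ℕ → ℝ := fun m => x m * r ^ m with hs
    have hsnn : ∀ m, 0 ≤ s m := fun m => mul_nonneg (hxnn m) (pow_nonneg hr.le m)
    set b : ℝ := a * r ^ μ' with hb
    have hbnn : 0 ≤ b := mul_nonneg hann (pow_nonneg hr.le μ')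
    have hqinn : (0:ℝ) ≤ ‖q‖⁻¹ := inv_nonneg.mpr hq0.le
    have hqi1 : ‖q‖⁻¹ ≤ 1 := inv_le_one_of_one_le₀ hq.le
    obtain ⟨M0, hM0⟩ := exists_pow_lt_of_lt_one (show (0:ℝ) < (1/2)/(b+1) by positivity)
      (show ‖q‖⁻¹ < 1 from inv_lt_one_of_one_lt₀ hq)
    set M := max M0 μ' with hM'
    have hMμ : μ' ≤ M := le_max_right _ _
    have hM : ∀ m : ℕ, M ≤ m → ‖q‖⁻¹ ^ m * b ≤ 1/2 := by
      intro m hm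
      have h1 : ‖q‖⁻¹ ^ m ≤ ‖q‖⁻¹ ^ M0 :=
        pow_le_pow_of_le_one hqinn hqi1 (le_trans (le_max_left _ _) hm)
      have h2 : ‖q‖⁻¹ ^ m * b ≤ ((1/2)/(b+1)) * (b+1) := by
        apply mul_le_mul (le_trans h1 hM0.le) (by linarith) hbnn (by positivity)
      rwa [div_mul_cancel₀ _ (by positivity : b + 1 ≠ 0)] at h2
    have hstep : ∀ m : ℕ, M ≤ m → s m ≤ y m * r ^ m + (1/2) * s (m - μ') := by
      intro m hm
      have h1 := hkey (m : ℤ)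
      have hxm : ((m:ℤ) - μ) = ((m - μ' : ℕ) : ℤ) := by omega
      rw [hxm, zpow_natCast] at h1
      set P : ℝ := ‖q‖ ^ m with hP
      have hPpos : 0 < P := pow_pos hq0 m
      have hP1 : 1 ≤ P := one_le_pow₀ hq.le
      set x' : ℝ := x ((m - μ' : ℕ) : ℤ) with hx'
      set r' : ℝ := r ^ (m - μ') with hr'
      have hx'nn : 0 ≤ x' := hxnn _
      have hr'nn : 0 ≤ r' := pow_nonneg hr.le _
      have hrm : r ^ m = r ^ μ' * r' := by rw [hr', ← pow_add]; congr 1; omega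
      have hb2 : b ≤ P / 2 := by
        have := hM m hm
        rw [inv_pow] at this
        rw [inv_mul_le_iff₀ hPpos] at this
        linarith
      have e1 : P * (x (m:ℤ) * r ^ m) ≤ y (m:ℤ) * r ^ m + b * (x' * r') := by
        have := mul_le_mul_of_nonneg_right h1 (pow_nonneg hr.le m)
        calc P * (x (m:ℤ) * r ^ m) = (P * x (m:ℤ)) * r ^ m := by ring
          _ ≤ (y (m:ℤ) + a * x') * r ^ m := this
          _ = y (m:ℤ) * r ^ m + b * (x' * r') := by rw [hrm, hb]; ring
      have e2 : b * (x' * r') ≤ (P/2) * (x' * r') :=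
        mul_le_mul_of_nonneg_right hb2 (mul_nonneg hx'nn hr'nn)
      have e3 : x (m:ℤ) * r ^ m ≤ (y (m:ℤ) * r ^ m + (P/2) * (x' * r')) / P := by
        rw [le_div_iff₀ hPpos]
        nlinarith
      have e4 : (y (m:ℤ) * r ^ m + (P/2) * (x' * r')) / P ≤ y (m:ℤ) * r ^ m + (1/2) * (x' * r') := by
        rw [div_le_iff₀ hPpos]
        have hynn' : 0 ≤ y (m:ℤ) * r ^ m := mul_nonneg (hynn _) (pow_nonneg hr.le m)
        nlinarith [mul_nonneg hx'nn hr'nn]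
      simp only [hs]
      exact le_trans e3 e4
    have hYsum : Summable (fun m : ℕ => y m * r ^ m) := by
      have he : (fun m : ℕ => y (m:ℤ) * r ^ m) = fun m : ℕ => ∑ i, ‖(Y i).coeff (m:ℤ)‖ * r ^ m := by
        funext m; rw [hy, Finset.sum_mul]
      rw [he]
      exact summable_sum fun i _ => hY i
    set Cy : ℝ := ∑' m : ℕ, y m * r ^ m with hCy
    have hCynn : 0 ≤ Cy := tsum_nonneg fun m => mul_nonneg (hynn _) (pow_nonneg hr.le m)
    set C0 : ℝ := ∑ m ∈ Finset.range M, s m with hC0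
    have hC0nn : 0 ≤ C0 := Finset.sum_nonneg fun m _ => hsnn m
    have hbound : ∀ K, ∑ m ∈ Finset.range K, s m ≤ 2 * (C0 + Cy) := by
      intro K
      rcases le_or_gt K M with hK | hK
      · have h1 : ∑ m ∈ Finset.range K, s m ≤ C0 :=
          Finset.sum_le_sum_of_subset_of_nonneg (Finset.range_subset_range.2 hK) fun m _ _ => hsnn m
        linarith
      · have hsplit : ∑ m ∈ Finset.range K, s m = C0 + ∑ m ∈ Finset.Ico M K, s m := by
          rw [hC0, Finset.range_eq_Ico, Finset.range_eq_Ico]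
          exact (Finset.sum_Ico_consecutive _ (Nat.zero_le M) hK.le).symm
        have hIy : ∑ m ∈ Finset.Ico M K, y (m:ℤ) * r ^ m ≤ Cy :=
          Summable.sum_le_tsum _ (fun m _ => mul_nonneg (hynn _) (pow_nonneg hr.le m)) hYsum
        have hIs : ∑ m ∈ Finset.Ico M K, s (m - μ') ≤ ∑ m ∈ Finset.range K, s m := by
          rw [← Finset.sum_image (f := s) (g := fun m => m - μ') (s := Finset.Ico M K)
            (fun p hp q' hq' h => by
              simp only [Finset.coe_Ico, Set.mem_Ico, Finset.mem_Ico] at hp hq'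
              simp only at h
              omega)]
          apply Finset.sum_le_sum_of_subset_of_nonneg
          · intro j hj
            simp only [Finset.mem_image, Finset.mem_Ico] at hj
            obtain ⟨m, hm, rfl⟩ := hj
            simp only [Finset.mem_range]
            omega
          · exact fun m _ _ => hsnn m
        have h2 : ∑ m ∈ Finset.Ico M K, s m ≤ Cy + (1/2) * ∑ m ∈ Finset.range K, s m := by
          calc ∑ m ∈ Finset.Ico M K, s m
              ≤ ∑ m ∈ Finset.Ico M K, (y (m:ℤ) * r ^ m + (1/2) * s (m - μ')) :=
                Finset.sum_le_sum fun m hm => hstep m (Finset.mem_Ico.1 hm).1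
            _ = (∑ m ∈ Finset.Ico M K, y (m:ℤ) * r ^ m)
                + (1/2) * ∑ m ∈ Finset.Ico M K, s (m - μ') := by
                rw [Finset.sum_add_distrib, Finset.mul_sum]
            _ ≤ Cy + (1/2) * ∑ m ∈ Finset.range K, s m := by
                refine add_le_add hIy ?_
                exact mul_le_mul_of_nonneg_left hIs (by norm_num)
        linarith [hsplit ▸ le_refl (∑ m ∈ Finset.range K, s m), hsplit]
    have hS : Summable s := summable_of_sum_range_le hsnn hbound
    intro i
    refine Summable.of_nonneg_of_le (fun m => by positivity) (fun m => ?_) hS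
    exact mul_le_mul_of_nonneg_right
      (Finset.single_le_sum (fun p _ => norm_nonneg ((X p).coeff (m:ℤ))) (Finset.mem_univ i))
      (pow_nonneg hr.le m)
end
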